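/- The optimization problems min_f max_k ‖h_k‖²(d_P2²(u_k, f) − 1) subject to ‖f‖ = 1 (where u_k = h_k/‖h_k‖) and min_f̃ ‖f̃‖² subject to ‖h_k^H f̃‖² ≥ 1 for all k have solutions related by scaling: if f̃* solves the second problem then f* = f̃*/‖f̃*‖ solves the first, and the optimal values satisfy (optimal value of first) = −1/(optimal value of second). -/

import Mathlib

open Matrix

lemma stmt15_aux_right (r : ℝ) {n : ℕ} (x y : EuclideanSpace ℂ (Fin n)) :
    ‖(inner ℂ x (r • y) : ℂ)‖ = |r| * ‖(inner ℂ x y : ℂ)‖ := by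
  rw [RCLike.real_smul_eq_coe_smul (K := ℂ), inner_smul_right, norm_mul]
  simp [Real.norm_eq_abs]

lemma stmt15_aux_left (r : ℝ) {n : ℕ} (x y : EuclideanSpace ℂ (Fin n)) :
    ‖(inner ℂ (r • x) y : ℂ)‖ = |r| * ‖(inner ℂ x y : ℂ)‖ := by
  rw [RCLike.real_smul_eq_coe_smul (K := ℂ), inner_smul_left, norm_mul]
  simp [Real.norm_eq_abs]

/-- Duality of scaling between the AirComp problem
`min_{‖f‖=1} max_k ‖h_k‖²(d_P2²(u_k,f) − 1)` (with `u_k = h_k/‖h_k‖` and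
`d_P2²(u_k,f) = 1 − |⟨u_k,f⟩|²`) and the multicast-type problem
`min ‖f̃‖² s.t. |⟨h_k,f̃⟩|² ≥ 1 ∀k`: if `f̃*` solves the latter, then
`f* = f̃*/‖f̃*‖` solves the former, and the optimal values are negative reciprocals. -/
theorem stmt_15 (N K : ℕ) (hK : 0 < K) (h : Fin K → EuclideanSpace ℂ (Fin N))
    (hh : ∀ k, h k ≠ 0) (ft : EuclideanSpace ℂ (Fin N)) (hft : ft ≠ 0)
    (hfeas : ∀ k, 1 ≤ ‖(inner ℂ (h k) ft : ℂ)‖ ^ 2)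
    (hopt : ∀ g : EuclideanSpace ℂ (Fin N),
      (∀ k, 1 ≤ ‖(inner ℂ (h k) g : ℂ)‖ ^ 2) → ‖ft‖ ^ 2 ≤ ‖g‖ ^ 2) :
    haveI : Nonempty (Fin K) := Fin.pos_iff_nonempty.mp hK
    let obj : EuclideanSpace ℂ (Fin N) → ℝ := fun g =>
      ⨆ k, ‖h k‖ ^ 2 *
        ((1 - ‖(inner ℂ ((‖h k‖⁻¹ : ℝ) • h k) g : ℂ)‖ ^ 2) - 1)
    let f : EuclideanSpace ℂ (Fin N) := (‖ft‖⁻¹ : ℝ) • ft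
    ‖f‖ = 1 ∧ (∀ g : EuclideanSpace ℂ (Fin N), ‖g‖ = 1 → obj f ≤ obj g)
      ∧ obj f = -1 / ‖ft‖ ^ 2 := by
  haveI : Nonempty (Fin K) := Fin.pos_iff_nonempty.mp hK
  intro obj f
  have hft0 : (0:ℝ) < ‖ft‖ := norm_pos_iff.mpr hft
  -- the objective simplifies
  have hobj : ∀ g : EuclideanSpace ℂ (Fin N),
      obj g = ⨆ k, -(‖(inner ℂ (h k) g : ℂ)‖ ^ 2) := by
    intro g
    apply iSup_congr
    intro k
    have hk0 : (0:ℝ) < ‖h k‖ := norm_pos_iff.mpr (hh k)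
    rw [stmt15_aux_left, abs_of_pos (inv_pos.mpr hk0)]
    field_simp
    ring
  have hbdd : ∀ g : EuclideanSpace ℂ (Fin N),
      BddAbove (Set.range fun k => -(‖(inner ℂ (h k) g : ℂ)‖ ^ 2)) :=
    fun g => (Set.finite_range _).bddAbove
  -- scaling lemma
  have hscale : ∀ (g : EuclideanSpace ℂ (Fin N)) (a : ℝ), 0 < a →
      (∀ k, a ≤ ‖(inner ℂ (h k) g : ℂ)‖ ^ 2) → ‖ft‖ ^ 2 * a ≤ ‖g‖ ^ 2 := by
    intro g a ha hag
    have hsq : Real.sqrt a ^ 2 = a := Real.sq_sqrt ha.le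
    have hs0 : (0:ℝ) < Real.sqrt a := Real.sqrt_pos.mpr ha
    have hfe : ∀ k, 1 ≤ ‖(inner ℂ (h k) ((Real.sqrt a)⁻¹ • g) : ℂ)‖ ^ 2 := by
      intro k
      rw [stmt15_aux_right, abs_of_pos (inv_pos.mpr hs0), mul_pow]
      rw [inv_pow, hsq, le_inv_mul_iff₀ ha, mul_one]
      exact hag k
    have hle := hopt _ hfe
    rw [norm_smul, Real.norm_eq_abs, abs_of_pos (inv_pos.mpr hs0), mul_pow,
      inv_pow, hsq] at hle
    calc ‖ft‖ ^ 2 * a ≤ (a⁻¹ * ‖g‖ ^ 2) * a := by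
          exact mul_le_mul_of_nonneg_right hle ha.le
      _ = ‖g‖ ^ 2 := by field_simp
  -- norm of inner ℂ with f
  have hAf : ∀ k, ‖(inner ℂ (h k) f : ℂ)‖ ^ 2
      = ‖ft‖⁻¹ ^ 2 * ‖(inner ℂ (h k) ft : ℂ)‖ ^ 2 := by
    intro k
    show ‖(inner ℂ (h k) ((‖ft‖⁻¹ : ℝ) • ft) : ℂ)‖ ^ 2 = _
    rw [stmt15_aux_right, abs_of_pos (inv_pos.mpr hft0), mul_pow]
  -- minimizer over k of the inner ℂ products with ft equals 1
  obtain ⟨j, -, hj⟩ := Finset.exists_min_image Finset.univ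
    (fun k => ‖(inner ℂ (h k) ft : ℂ)‖ ^ 2) Finset.univ_nonempty
  have hj1 : ‖(inner ℂ (h j) ft : ℂ)‖ ^ 2 = 1 := by
    have h1 : (0:ℝ) < ‖(inner ℂ (h j) ft : ℂ)‖ ^ 2 :=
      lt_of_lt_of_le one_pos (hfeas j)
    have := hscale ft _ h1 (fun k => hj k (Finset.mem_univ k))
    have hp : (0:ℝ) < ‖ft‖ ^ 2 := by positivity
    have hle : ‖(inner ℂ (h j) ft : ℂ)‖ ^ 2 ≤ 1 := by
      nlinarith [hp]
    exact le_antisymm hle (hfeas j)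
  -- value of obj f
  have hval : obj f = -1 / ‖ft‖ ^ 2 := by
    rw [hobj]
    apply le_antisymm
    · apply ciSup_le
      intro k
      rw [hAf]
      have := hfeas k
      rw [neg_div]
      have h2 : (1:ℝ) / ‖ft‖ ^ 2 ≤ ‖ft‖⁻¹ ^ 2 * ‖(inner ℂ (h k) ft : ℂ)‖ ^ 2 := by
        rw [inv_pow, ← one_div]
        have hp2 : (0:ℝ) < 1 / ‖ft‖ ^ 2 := by positivity
        nlinarith [hp2, this]
      linarith
    · have hle := le_ciSup (hbdd f) j
      have : -(‖(inner ℂ (h j) f : ℂ)‖ ^ 2) = -1 / ‖ft‖ ^ 2 := by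
        rw [hAf, hj1, mul_one, inv_pow, neg_div, one_div]
      linarith [hle, this.symm.le]
  refine ⟨?_, ?_, hval⟩
  · show ‖(‖ft‖⁻¹ : ℝ) • ft‖ = 1
    rw [norm_smul, Real.norm_eq_abs, abs_of_pos (inv_pos.mpr hft0)]
    field_simp
  · intro g hg
    rw [hval, hobj]
    obtain ⟨i, -, hi⟩ := Finset.exists_min_image Finset.univ
      (fun k => ‖(inner ℂ (h k) g : ℂ)‖ ^ 2) Finset.univ_nonempty
    have hle := le_ciSup (hbdd g) i
    rcases eq_or_lt_of_le (sq_nonneg ‖(inner ℂ (h i) g : ℂ)‖) with h0 | hpos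
    · have : -1 / ‖ft‖ ^ 2 ≤ -(‖(inner ℂ (h i) g : ℂ)‖ ^ 2) := by
        rw [← h0, neg_zero, neg_div]
        have : (0:ℝ) < 1 / ‖ft‖ ^ 2 := by positivity
        linarith
      linarith
    · have hsc := hscale g _ hpos (fun k => hi k (Finset.mem_univ k))
      rw [hg, one_pow] at hsc
      have : -1 / ‖ft‖ ^ 2 ≤ -(‖(inner ℂ (h i) g : ℂ)‖ ^ 2) := by
        rw [neg_div, neg_le_neg_iff, le_div_iff₀ (by positivity : (0:ℝ) < ‖ft‖ ^ 2)]
        nlinarith [hsc]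
      linarith
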